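/- Let (X,‖·‖) be a real normed space, v_1, v_2 ∈ X with v_1 ≠ v_2, and let ψ ∈ Ψ_2 be permutation-symmetric (ψ(t_1,t_2) = ψ(t_2,t_1) on Ω_2). Then the midpoint ū := (v_1+v_2)/2 is a global minimizer of the function f(u) := |||(u−v_1, u−v_2)|||_ψ over X, and the minimal value is f(ū) = ‖v_1 − v_2‖ · ψ(1/2, 1/2). -/

import Mathlib

open Finset

/-- The class `Ψ_n` of continuous convex functions on the standard simplex `Ω_n`
with `ψ(e_i) = 1` and the renormalization inequality. -/
def PsiClass (n : ℕ) (ψ : (Fin n → ℝ) → ℝ) : Prop :=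
  ContinuousOn ψ (stdSimplex ℝ (Fin n)) ∧
  ConvexOn ℝ (stdSimplex ℝ (Fin n)) ψ ∧
  (∀ i : Fin n, ψ (fun j => if j = i then 1 else 0) = 1) ∧
  (∀ t ∈ stdSimplex ℝ (Fin n), ∀ i : Fin n, t i < 1 →
    (1 - t i) * ψ (fun j => if j = i then 0 else t j / (1 - t i)) ≤ ψ t)

-- The `ψ`-product norm `|||x|||_ψ` on `X^n`.
open scoped Classical in
noncomputable def prodNorm {X : Type*} [NormedAddCommGroup X] {n : ℕ}
    (ψ : (Fin n → ℝ) → ℝ) (x : Fin n → X) : ℝ :=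
  if x = 0 then 0 else (∑ i, ‖x i‖) * ψ (fun i => ‖x i‖ / ∑ j, ‖x j‖)

lemma half_mem_simplex : (fun _ => (1/2:ℝ)) ∈ stdSimplex ℝ (Fin 2) :=
  ⟨fun _ => by norm_num, by rw [Fin.sum_univ_two]; norm_num⟩

lemma psi_half_ge {ψ : (Fin 2 → ℝ) → ℝ} (hψ : PsiClass 2 ψ) :
    (1/2 : ℝ) ≤ ψ (fun _ => 1/2) := by
  have h := hψ.2.2.2 (fun _ => 1/2) half_mem_simplex 0 (by norm_num)
  have he : (fun j : Fin 2 => if j = 0 then (0:ℝ) else (1/2 : ℝ) / (1 - 1/2))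
      = (fun j : Fin 2 => if j = (1 : Fin 2) then (1:ℝ) else 0) := by
    funext j
    fin_cases j <;> norm_num
  rw [he, hψ.2.2.1 1] at h
  linarith

lemma psi_half_le {ψ : (Fin 2 → ℝ) → ℝ} (hψ : PsiClass 2 ψ)
    (hsym : ∀ t ∈ stdSimplex ℝ (Fin 2), ψ (t ∘ Equiv.swap 0 1) = ψ t)
    {t : Fin 2 → ℝ} (ht : t ∈ stdSimplex ℝ (Fin 2)) :
    ψ (fun _ => 1/2) ≤ ψ t := by
  have ht' : (t ∘ Equiv.swap 0 1) ∈ stdSimplex ℝ (Fin 2) := by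
    refine ⟨fun i => ht.1 _, ?_⟩
    rw [← ht.2]
    exact Equiv.sum_comp (Equiv.swap 0 1) t
  have h := hψ.2.1.2 ht ht' (by norm_num : (0:ℝ) ≤ 1/2) (by norm_num : (0:ℝ) ≤ 1/2)
    (by norm_num)
  have hsum : t 0 + t 1 = 1 := by
    have := ht.2; rwa [Fin.sum_univ_two] at this
  have heq : ((1/2 : ℝ) • t + (1/2 : ℝ) • (t ∘ Equiv.swap 0 1)) = fun _ => (1/2 : ℝ) := by
    funext j
    fin_cases j <;>
      simp [Equiv.swap_apply_left, Equiv.swap_apply_right] <;> linarith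
  rw [heq, hsym t ht, smul_eq_mul] at h
  linarith

theorem stmt_15 {X : Type*} [NormedAddCommGroup X] [NormedSpace ℝ X]
    (v₁ v₂ : X) (hv : v₁ ≠ v₂) (ψ : (Fin 2 → ℝ) → ℝ) (hψ : PsiClass 2 ψ)
    (hsym : ∀ t ∈ stdSimplex ℝ (Fin 2), ψ (t ∘ Equiv.swap 0 1) = ψ t) :
    (∀ u : X,
        prodNorm ψ (fun i => (2 : ℝ)⁻¹ • (v₁ + v₂) - ![v₁, v₂] i) ≤
          prodNorm ψ (fun i => u - ![v₁, v₂] i)) ∧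
      prodNorm ψ (fun i => (2 : ℝ)⁻¹ • (v₁ + v₂) - ![v₁, v₂] i) =
        ‖v₁ - v₂‖ * ψ (fun _ => 1 / 2) := by
  have hd : v₁ - v₂ ≠ 0 := sub_ne_zero.mpr hv
  have hdn : (0:ℝ) < ‖v₁ - v₂‖ := norm_pos_iff.mpr hd
  set x : Fin 2 → X := fun i => (2 : ℝ)⁻¹ • (v₁ + v₂) - ![v₁, v₂] i with hx
  have hx0 : x 0 = (2:ℝ)⁻¹ • (v₂ - v₁) := by
    show (2 : ℝ)⁻¹ • (v₁ + v₂) - ![v₁, v₂] 0 = _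
    rw [Matrix.cons_val_zero]; module
  have hx1 : x 1 = (2:ℝ)⁻¹ • (v₁ - v₂) := by
    show (2 : ℝ)⁻¹ • (v₁ + v₂) - ![v₁, v₂] 1 = _
    rw [Matrix.cons_val_one, Matrix.cons_val_zero]; module
  have hn0 : ‖x 0‖ = 2⁻¹ * ‖v₁ - v₂‖ := by
    rw [hx0, norm_smul, norm_sub_rev]
    norm_num
  have hn1 : ‖x 1‖ = 2⁻¹ * ‖v₁ - v₂‖ := by
    rw [hx1, norm_smul]
    norm_num
  have hne : x ≠ 0 := by
    intro h
    apply hd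
    have h1 := congrFun h 1
    rw [hx1] at h1
    simpa [hdn.ne'] using h1
  have hval : prodNorm ψ x = ‖v₁ - v₂‖ * ψ (fun _ => 1 / 2) := by
    rw [prodNorm, if_neg hne]
    have hsum : ∑ i, ‖x i‖ = ‖v₁ - v₂‖ := by
      rw [Fin.sum_univ_two, hn0, hn1]; ring
    simp only [hsum]
    congr 1
    refine congrArg ψ ?_
    funext i
    fin_cases i
    · show ‖x 0‖ / ‖v₁ - v₂‖ = 1 / 2
      rw [hn0]; field_simp
    · show ‖x 1‖ / ‖v₁ - v₂‖ = 1 / 2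
      rw [hn1]; field_simp
  refine ⟨fun u => ?_, hval⟩
  have hy : (fun i => u - ![v₁, v₂] i) ≠ 0 := by
    intro h
    apply hv
    have h0 := congrFun h 0
    have h1 := congrFun h 1
    simp [sub_eq_zero] at h0 h1
    rw [← h0, ← h1]
  rw [hval, prodNorm, if_neg hy]
  have hsum : ∑ i, ‖u - ![v₁, v₂] i‖ = ‖u - v₁‖ + ‖u - v₂‖ := by
    rw [Fin.sum_univ_two]
    simp
  have h2 : ‖v₁ - v₂‖ ≤ ∑ i, ‖u - ![v₁, v₂] i‖ := by
    rw [hsum]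
    have : v₁ - v₂ = (u - v₂) - (u - v₁) := by abel
    rw [this]
    calc ‖(u - v₂) - (u - v₁)‖ ≤ ‖u - v₂‖ + ‖u - v₁‖ := norm_sub_le _ _
      _ = ‖u - v₁‖ + ‖u - v₂‖ := add_comm _ _
  have hspos : (0:ℝ) < ∑ i, ‖u - ![v₁, v₂] i‖ := lt_of_lt_of_le hdn h2
  have hts : (fun i => ‖u - ![v₁, v₂] i‖ / ∑ j, ‖u - ![v₁, v₂] j‖) ∈ stdSimplex ℝ (Fin 2) := by
    refine ⟨fun i => div_nonneg (norm_nonneg _) hspos.le, ?_⟩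
    rw [← Finset.sum_div, div_self hspos.ne']
  have h1 : ψ (fun _ => 1/2) ≤ ψ (fun i => ‖u - ![v₁, v₂] i‖ / ∑ j, ‖u - ![v₁, v₂] j‖) :=
    psi_half_le hψ hsym hts
  have h3 : (0:ℝ) ≤ ψ (fun _ => 1/2) := le_trans (by norm_num) (psi_half_ge hψ)
  calc ‖v₁ - v₂‖ * ψ (fun _ => 1/2)
      ≤ (∑ i, ‖u - ![v₁, v₂] i‖) * ψ (fun _ => 1/2) :=
        mul_le_mul_of_nonneg_right h2 h3
    _ ≤ (∑ i, ‖u - ![v₁, v₂] i‖) * ψ (fun i => ‖u - ![v₁, v₂] i‖ / ∑ j, ‖u - ![v₁, v₂] j‖) :=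
        mul_le_mul_of_nonneg_left h1 hspos.le
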